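/- Consider an OCO with unbounded memory instance (𝒳, ℋ, A, B) with H_1 = Σ_{k=0}^∞ k‖A^k‖ < ∞. Let f_1, …, f_T : ℋ → ℝ be L-Lipschitz continuous, suppose each f̄_t is convex and L̄-Lipschitz continuous, let R : 𝒳 → ℝ be α-strongly convex with |R(x) − R(x̃)| ≤ D for all x, x̃ ∈ 𝒳, let η > 0, and suppose for each t the decision x_t ∈ 𝒳 minimizes x ↦ Σ_{s=1}^{t-1} f̄_s(x) + R(x)/η over 𝒳 (FTRL iterates, with the minimizer for index T+1 also existing). Then the policy regret satisfies Σ_{t=1}^{T} f_t(h_t) − inf_{x ∈ 𝒳} Σ_{t=1}^{T} f̄_t(x) ≤ D/η + η T L̄² / α + η T L L̄ H_1 / α. -/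

import Mathlib

/-- Sum of convex functions is convex. -/
lemma aux_sum_convexOn {W : Type*} [NormedAddCommGroup W] [NormedSpace ℝ W]
    {X : Set W} (hX : Convex ℝ X) {ι : Type*} (s : Finset ι) (g : ι → W → ℝ)
    (hg : ∀ i ∈ s, ConvexOn ℝ X (g i)) :
    ConvexOn ℝ X (fun x => ∑ i ∈ s, g i x) := by
  classical
  induction s using Finset.induction_on with
  | empty => simpa using convexOn_const 0 hX
  | @insert a s' hni ih =>
    simp only [Finset.sum_insert hni]
    exact (hg a (Finset.mem_insert_self a s')).add
      (ih fun i hi => hg i (Finset.mem_insert_of_mem hi))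

/-- Convex + strongly convex is strongly convex. -/
lemma aux_convex_add_strong {W : Type*} [NormedAddCommGroup W] [NormedSpace ℝ W]
    {X : Set W} {φ g : W → ℝ} {m : ℝ}
    (hφ : ConvexOn ℝ X φ) (hg : StrongConvexOn X m g) :
    StrongConvexOn X m (fun y => φ y + g y) := by
  refine ⟨hg.1, fun a ha b hb p q hp hq hpq => ?_⟩
  have h1 := hφ.2 ha hb hp hq hpq
  have h2 := hg.2 ha hb hp hq hpq
  simp only [smul_eq_mul] at *
  linarith

/-- Scaling of a strongly convex function. -/
lemma aux_strong_smul {W : Type*} [NormedAddCommGroup W] [NormedSpace ℝ W]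
    {X : Set W} {g : W → ℝ} {m η : ℝ} (hη : 0 < η)
    (hg : StrongConvexOn X m g) :
    StrongConvexOn X (m / η) (fun y => g y / η) := by
  refine ⟨hg.1, fun a ha b hb p q hp hq hpq => ?_⟩
  have h := hg.2 ha hb hp hq hpq
  simp only [smul_eq_mul] at h ⊢
  rw [div_le_iff₀ hη]
  refine h.trans (le_of_eq ?_)
  field_simp

/-- The minimizer gap for a strongly convex function. -/
lemma aux_gap {W : Type*} [NormedAddCommGroup W] [NormedSpace ℝ W]
    {X : Set W} {g : W → ℝ} {m : ℝ} (hm : 0 < m)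
    (hg : StrongConvexOn X m g) {z : W} (hz : z ∈ X)
    (hmin : ∀ y ∈ X, g z ≤ g y) :
    ∀ y ∈ X, g z + m / 2 * ‖z - y‖ ^ 2 ≤ g y := by
  intro y hy
  set c : ℝ := m / 2 * ‖z - y‖ ^ 2 with hc
  have hc0 : 0 ≤ c := by positivity
  by_contra hlt
  push_neg at hlt
  have hd0 : 0 ≤ g y - g z := sub_nonneg.2 (hmin y hy)
  set d : ℝ := g y - g z with hdd
  have hdc : d < c := by simp only [hdd]; linarith
  have hcpos : 0 < c := lt_of_le_of_lt hd0 hdc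
  set a : ℝ := (c - d) / (2 * c) with ha
  have ha0 : 0 < a := div_pos (by linarith) (by linarith)
  have ha1 : a ≤ 1 := by
    rw [ha, div_le_one (by linarith)]
    linarith
  have hb0 : 0 ≤ 1 - a := by linarith
  have key := hg.2 hy hz ha0.le hb0 (by ring)
  have hmem : a • y + (1 - a) • z ∈ X := hg.1 hy hz ha0.le hb0 (by ring)
  have hge := hmin _ hmem
  simp only [smul_eq_mul] at key
  have hnorm : ‖y - z‖ = ‖z - y‖ := norm_sub_rev _ _
  rw [hnorm] at key
  have h1 : g z ≤ a * g y + (1 - a) * g z - a * (1 - a) * c := le_trans hge key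
  have h2 : (1 - a) * c ≤ d := by nlinarith
  have h3 : (1 - a) * c = (c + d) / 2 := by rw [ha]; field_simp; ring
  nlinarith

/-- regret upper bound for FTRL with unbounded memory. Under the same setup as
Statement 5, with regularizer oscillation at most `D` on `𝒳` and FTRL minimizers existing for
`t ∈ {1, …, T+1}`, the policy regret satisfies
`∑ₜ f_t(h_t) − ∑ₜ f̄_t(y) ≤ D/η + η T L̄²/α + η T L L̄ H₁/α` for every comparator `y ∈ 𝒳`. -/
theorem stmt_6
    {W : Type*} [NormedAddCommGroup W] [InnerProductSpace ℝ W] [CompleteSpace W]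
    {H : Type*} [NormedAddCommGroup H] [NormedSpace ℝ H] [CompleteSpace H]
    (X : Set W) (hXne : X.Nonempty) (hXclosed : IsClosed X) (hXconvex : Convex ℝ X)
    (A : H →L[ℝ] H) (B : W →L[ℝ] H) (hB : ‖B‖ ≤ 1)
    (hH1 : Summable fun k : ℕ => (k : ℝ) * ‖A ^ k‖)
    (T : ℕ) (f : ℕ → H → ℝ) (L Lbar : ℝ) (hL : 0 ≤ L) (hLbar : 0 ≤ Lbar)
    (hf : ∀ t, 1 ≤ t → t ≤ T → ∀ a b : H, |f t a - f t b| ≤ L * ‖a - b‖)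
    (hconv : ∀ t, 1 ≤ t → t ≤ T →
      ConvexOn ℝ X (fun x : W => f t (∑ k ∈ Finset.range t, (A ^ k) (B x))))
    (hlipbar : ∀ t, 1 ≤ t → t ≤ T → ∀ a ∈ X, ∀ b ∈ X,
      |f t (∑ k ∈ Finset.range t, (A ^ k) (B a)) - f t (∑ k ∈ Finset.range t, (A ^ k) (B b))|
        ≤ Lbar * ‖a - b‖)
    (R : W → ℝ) (α : ℝ) (hα : 0 < α) (hR : StrongConvexOn X α R)
    (D : ℝ) (hD : ∀ a ∈ X, ∀ b ∈ X, |R a - R b| ≤ D)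
    (η : ℝ) (hη : 0 < η)
    (x : ℕ → W)
    (hx : ∀ t, 1 ≤ t → t ≤ T + 1 → x t ∈ X ∧
      ∀ y ∈ X,
        (∑ s ∈ Finset.Icc 1 (t - 1), f s (∑ k ∈ Finset.range s, (A ^ k) (B (x t))))
            + R (x t) / η
          ≤ (∑ s ∈ Finset.Icc 1 (t - 1), f s (∑ k ∈ Finset.range s, (A ^ k) (B y)))
            + R y / η)
    (h : ℕ → H) (hh0 : h 0 = 0) (hh : ∀ t : ℕ, h (t + 1) = A (h t) + B (x (t + 1))) :
    ∀ y ∈ X,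
      (∑ t ∈ Finset.Icc 1 T, f t (h t))
          - (∑ t ∈ Finset.Icc 1 T, f t (∑ k ∈ Finset.range t, (A ^ k) (B y)))
        ≤ D / η + η * T * Lbar ^ 2 / α
            + η * T * L * Lbar * (∑' k : ℕ, (k : ℝ) * ‖A ^ k‖) / α := by
  intro y hy
  set F : ℕ → W → ℝ := fun t z => f t (∑ k ∈ Finset.range t, (A ^ k) (B z)) with hF
  set S : ℝ := ∑' k : ℕ, (k : ℝ) * ‖A ^ k‖ with hS
  set c : ℝ := η * Lbar / α with hc
  have hc0 : 0 ≤ c := by positivity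
  have hS0 : 0 ≤ S := tsum_nonneg (fun k => by positivity)
  have hxmem : ∀ t, 1 ≤ t → t ≤ T + 1 → x t ∈ X := fun t h1 h2 => (hx t h1 h2).1
  have hxmin : ∀ t, 1 ≤ t → t ≤ T + 1 → ∀ z ∈ X,
      (∑ s ∈ Finset.Icc 1 (t - 1), F s (x t)) + R (x t) / η
        ≤ (∑ s ∈ Finset.Icc 1 (t - 1), F s z) + R z / η := by
    intro t h1 h2 z hz
    simpa only [hF] using (hx t h1 h2).2 z hz
  -- strong convexity of the FTRL objective
  have hΦsc : ∀ t, 1 ≤ t → t ≤ T + 1 → StrongConvexOn X (α / η)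
      (fun z => (∑ s ∈ Finset.Icc 1 (t - 1), F s z) + R z / η) := by
    intro t h1 h2
    refine aux_convex_add_strong ?_ (aux_strong_smul hη hR)
    refine aux_sum_convexOn hXconvex _ _ (fun s hs => ?_)
    obtain ⟨hs1, hs2⟩ := Finset.mem_Icc.1 hs
    have := hconv s hs1 (by omega)
    simpa only [hF] using this
  have hgap : ∀ t, 1 ≤ t → t ≤ T + 1 → ∀ z ∈ X,
      ((∑ s ∈ Finset.Icc 1 (t - 1), F s (x t)) + R (x t) / η) + (α / η) / 2 * ‖x t - z‖ ^ 2
        ≤ (∑ s ∈ Finset.Icc 1 (t - 1), F s z) + R z / η := by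
    intro t h1 h2
    exact aux_gap (div_pos hα hη) (hΦsc t h1 h2) (hxmem t h1 h2) (hxmin t h1 h2)
  have hsucc : ∀ t, 1 ≤ t → ∀ z : W,
      (∑ s ∈ Finset.Icc 1 (t + 1 - 1), F s z) = (∑ s ∈ Finset.Icc 1 (t - 1), F s z) + F t z := by
    intro t ht z
    obtain ⟨m, rfl⟩ : ∃ m, t = m + 1 := ⟨t - 1, by omega⟩
    simp only [Nat.add_sub_cancel]
    exact Finset.sum_Icc_succ_top (by omega) _
  -- stability
  have hstep : ∀ t, 1 ≤ t → t ≤ T → ‖x t - x (t + 1)‖ ≤ c := by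
    intro t h1 h2
    have g1 := hgap t h1 (by omega) (x (t + 1)) (hxmem (t + 1) (by omega) (by omega))
    have g2 := hgap (t + 1) (by omega) (by omega) (x t) (hxmem t h1 (by omega))
    rw [hsucc t h1 (x (t + 1)), hsucc t h1 (x t), norm_sub_rev] at g2
    have hlip := hlipbar t h1 h2 (x t) (hxmem t h1 (by omega)) (x (t + 1))
      (hxmem (t + 1) (by omega) (by omega))
    have hFle : F t (x t) - F t (x (t + 1)) ≤ Lbar * ‖x t - x (t + 1)‖ := by
      simp only [hF]; exact (le_abs_self _).trans hlip
    set n : ℝ := ‖x t - x (t + 1)‖ with hn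
    have hn0 : 0 ≤ n := norm_nonneg _
    have hkey : α / η * n ^ 2 ≤ Lbar * n := by nlinarith [g1, g2, hFle]
    rcases eq_or_lt_of_le hn0 with hn' | hn'
    · rw [← hn']; exact hc0
    · rw [hc, le_div_iff₀ hα]
      have hkey2 : α * n ^ 2 ≤ η * Lbar * n := by
        have h' := mul_le_mul_of_nonneg_left hkey hη.le
        calc α * n ^ 2 = η * (α / η * n ^ 2) := by field_simp
          _ ≤ η * (Lbar * n) := h'
          _ = η * Lbar * n := by ring
      nlinarith [hkey2, hn']
  have htele : ∀ k s, 1 ≤ s → s + k ≤ T → ‖x s - x (s + k)‖ ≤ k * c := by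
    intro k
    induction k with
    | zero => intro s h1 h2; simp
    | succ k ih =>
      intro s h1 h2
      have h3 : s + (k + 1) = s + k + 1 := by omega
      rw [h3]
      have tri : ‖x s - x (s + k + 1)‖ ≤ ‖x s - x (s + k)‖ + ‖x (s + k) - x (s + k + 1)‖ :=
        norm_sub_le_norm_sub_add_norm_sub _ _ _
      have ih' := ih s h1 (by omega)
      have hst := hstep (s + k) (by omega) (by omega)
      push_cast
      linarith
  -- the history formula
  have hhist : ∀ t, h t = ∑ k ∈ Finset.range t, (A ^ k) (B (x (t - k))) := by
    intro t
    induction t with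
    | zero => simp [hh0]
    | succ t ih =>
      rw [hh t, ih, Finset.sum_range_succ' (fun k => (A ^ k) (B (x (t + 1 - k)))) t]
      simp only [Nat.succ_sub_succ, pow_zero, ContinuousLinearMap.one_apply, Nat.sub_zero,
        map_sum, pow_succ', ContinuousLinearMap.mul_apply]
  -- per-round memory error
  have hmem_bound : ∀ t, 1 ≤ t → t ≤ T →
      f t (h t) - F t (x t) ≤ L * (c * S) := by
    intro t h1 h2
    have hd : ‖h t - ∑ k ∈ Finset.range t, (A ^ k) (B (x t))‖ ≤ c * S := by
      rw [hhist t, ← Finset.sum_sub_distrib]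
      calc ‖∑ k ∈ Finset.range t, ((A ^ k) (B (x (t - k))) - (A ^ k) (B (x t)))‖
          ≤ ∑ k ∈ Finset.range t, ‖(A ^ k) (B (x (t - k))) - (A ^ k) (B (x t))‖ :=
            norm_sum_le _ _
        _ ≤ ∑ k ∈ Finset.range t, ‖A ^ k‖ * ((k : ℝ) * c) := by
            refine Finset.sum_le_sum (fun k hk => ?_)
            have hkt : k < t := Finset.mem_range.1 hk
            have e1 : (A ^ k) (B (x (t - k))) - (A ^ k) (B (x t))
                = (A ^ k) (B (x (t - k) - x t)) := by rw [map_sub, map_sub]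
            rw [e1]
            have hxd : ‖x (t - k) - x t‖ ≤ (k : ℝ) * c := by
              have := htele k (t - k) (by omega) (by omega)
              rwa [Nat.sub_add_cancel (by omega)] at this
            calc ‖(A ^ k) (B (x (t - k) - x t))‖ ≤ ‖A ^ k‖ * ‖B (x (t - k) - x t)‖ :=
                  ContinuousLinearMap.le_opNorm _ _
              _ ≤ ‖A ^ k‖ * ‖x (t - k) - x t‖ := by
                  refine mul_le_mul_of_nonneg_left ?_ (norm_nonneg _)
                  calc ‖B (x (t - k) - x t)‖ ≤ ‖B‖ * ‖x (t - k) - x t‖ :=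
                        ContinuousLinearMap.le_opNorm _ _
                    _ ≤ 1 * ‖x (t - k) - x t‖ :=
                        mul_le_mul_of_nonneg_right hB (norm_nonneg _)
                    _ = ‖x (t - k) - x t‖ := one_mul _
              _ ≤ ‖A ^ k‖ * ((k : ℝ) * c) := mul_le_mul_of_nonneg_left hxd (norm_nonneg _)
        _ = c * ∑ k ∈ Finset.range t, (k : ℝ) * ‖A ^ k‖ := by
            rw [Finset.mul_sum]; exact Finset.sum_congr rfl (fun k _ => by ring)
        _ ≤ c * S := by
            refine mul_le_mul_of_nonneg_left ?_ hc0
            rw [hS]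
            exact Summable.sum_le_tsum (Finset.range t) (fun k _ => by positivity) hH1
    have := hf t h1 h2 (h t) (∑ k ∈ Finset.range t, (A ^ k) (B (x t)))
    have h' : f t (h t) - F t (x t) ≤ L * ‖h t - ∑ k ∈ Finset.range t, (A ^ k) (B (x t))‖ := by
      simp only [hF]
      exact (le_abs_self _).trans this
    exact h'.trans (mul_le_mul_of_nonneg_left hd hL)
  -- be-the-leader
  have hBTL : ∀ n, n ≤ T →
      (∑ s ∈ Finset.Icc 1 n, F s (x (s + 1))) + R (x 1) / η
        ≤ (∑ s ∈ Finset.Icc 1 n, F s (x (n + 1))) + R (x (n + 1)) / η := by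
    intro n
    induction n with
    | zero => intro _; simp
    | succ n ih =>
      intro hn
      have ih' := ih (by omega)
      have hmin := hxmin (n + 1) (by omega) (by omega) (x (n + 1 + 1))
        (hxmem (n + 1 + 1) (by omega) (by omega))
      simp only [Nat.add_sub_cancel] at hmin
      rw [Finset.sum_Icc_succ_top (by omega : 1 ≤ n + 1),
        Finset.sum_Icc_succ_top (by omega : 1 ≤ n + 1)]
      linarith
  -- FTRL regret bound
  have key2 : (∑ t ∈ Finset.Icc 1 T, F t (x t)) - (∑ t ∈ Finset.Icc 1 T, F t y)
      ≤ D / η + (T : ℝ) * (Lbar * c) := by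
    have hb := hBTL T le_rfl
    have hcomp := hxmin (T + 1) (by omega) (by omega) y hy
    simp only [Nat.add_sub_cancel] at hcomp
    have hcombo : (∑ s ∈ Finset.Icc 1 T, F s (x (s + 1))) + R (x 1) / η
        ≤ (∑ s ∈ Finset.Icc 1 T, F s y) + R y / η := le_trans hb hcomp
    have hDle : (R y - R (x 1)) / η ≤ D / η := by
      gcongr
      linarith [le_abs_self (R y - R (x 1)), hD y hy (x 1) (hxmem 1 le_rfl (by omega))]
    have hdiff : (∑ t ∈ Finset.Icc 1 T, (F t (x t) - F t (x (t + 1))))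
        ≤ (T : ℝ) * (Lbar * c) := by
      have hcard : ((Finset.Icc 1 T).card : ℝ) = (T : ℝ) := by
        simp [Nat.card_Icc]
      calc (∑ t ∈ Finset.Icc 1 T, (F t (x t) - F t (x (t + 1))))
          ≤ ∑ t ∈ Finset.Icc 1 T, (Lbar * c) := by
            refine Finset.sum_le_sum (fun t ht => ?_)
            obtain ⟨ht1, ht2⟩ := Finset.mem_Icc.1 ht
            have hlip := hlipbar t ht1 ht2 (x t) (hxmem t ht1 (by omega)) (x (t + 1))
              (hxmem (t + 1) (by omega) (by omega))
            have : F t (x t) - F t (x (t + 1)) ≤ Lbar * ‖x t - x (t + 1)‖ := by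
              simp only [hF]; exact (le_abs_self _).trans hlip
            have hst := hstep t ht1 ht2
            nlinarith
        _ = (T : ℝ) * (Lbar * c) := by rw [Finset.sum_const, nsmul_eq_mul, hcard]
    have hsplit : (∑ t ∈ Finset.Icc 1 T, F t (x t))
        = (∑ t ∈ Finset.Icc 1 T, (F t (x t) - F t (x (t + 1))))
          + (∑ t ∈ Finset.Icc 1 T, F t (x (t + 1))) := by
      rw [Finset.sum_sub_distrib]; ring
    have h9 : (∑ s ∈ Finset.Icc 1 T, F s (x (s + 1))) - (∑ s ∈ Finset.Icc 1 T, F s y)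
        ≤ D / η := by
      have : (∑ s ∈ Finset.Icc 1 T, F s (x (s + 1))) - (∑ s ∈ Finset.Icc 1 T, F s y)
          ≤ (R y - R (x 1)) / η := by
        have e : (R y - R (x 1)) / η = R y / η - R (x 1) / η := by ring
        rw [e]
        linarith [hcombo]
      exact this.trans hDle
    linarith [hsplit, hdiff, h9]
  -- memory term totals
  have key1 : (∑ t ∈ Finset.Icc 1 T, (f t (h t) - F t (x t)))
      ≤ (T : ℝ) * (L * (c * S)) := by
    have hcard : ((Finset.Icc 1 T).card : ℝ) = (T : ℝ) := by
      simp [Nat.card_Icc]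
    calc (∑ t ∈ Finset.Icc 1 T, (f t (h t) - F t (x t)))
        ≤ ∑ t ∈ Finset.Icc 1 T, (L * (c * S)) := by
          refine Finset.sum_le_sum (fun t ht => ?_)
          obtain ⟨ht1, ht2⟩ := Finset.mem_Icc.1 ht
          exact hmem_bound t ht1 ht2
      _ = (T : ℝ) * (L * (c * S)) := by rw [Finset.sum_const, nsmul_eq_mul, hcard]
  -- combine
  have hgoalF : (∑ t ∈ Finset.Icc 1 T, f t (∑ k ∈ Finset.range t, (A ^ k) (B y)))
      = ∑ t ∈ Finset.Icc 1 T, F t y := by simp only [hF]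
  rw [hgoalF]
  have hsplit2 : (∑ t ∈ Finset.Icc 1 T, f t (h t))
      = (∑ t ∈ Finset.Icc 1 T, (f t (h t) - F t (x t))) + (∑ t ∈ Finset.Icc 1 T, F t (x t)) := by
    rw [Finset.sum_sub_distrib]; ring
  have final : (∑ t ∈ Finset.Icc 1 T, f t (h t)) - (∑ t ∈ Finset.Icc 1 T, F t y)
      ≤ (T : ℝ) * (L * (c * S)) + (D / η + (T : ℝ) * (Lbar * c)) := by
    linarith [hsplit2, key1, key2]
  refine final.trans (le_of_eq ?_)
  rw [hc]
  field_simp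
  ring
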